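/- Let M, N ≥ 0 and let H be the (M+N+1)×(M+N+1) complex tridiagonal matrix indexed by k ∈ {−M,…,N} with diagonal entries a_k, superdiagonal entries b_k and subdiagonal entries c_{k+1}. Fix z ∈ ℂ and suppose all denominators in the two continued-fraction recurrences f_{−M−1}(z)=0, f_{−j}(z) = 1/(a_{−j} − z − c_{−j} f_{−j−1}(z) b_{−j−1}) (j = M,…,1) and f_{N+1}(z)=0, f_k(z) = 1/(a_k − z − b_k f_{k+1}(z) c_{k+1}) (k = N,…,1) are nonzero, and also that D_0(z) = a_0 − z − c_0 f_{−1}(z) b_{−1} − b_0 f_1(z) c_1 ≠ 0. Then H − zI is invertible and the (0,0) entry of its inverse equals the two-continued-fraction Green's function: ((H − zI)^{-1})_{0,0} = 1/D_0(z). -/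

import Mathlib

open Matrix BigOperators

/-- The `(M+N+1) × (M+N+1)` complex tridiagonal matrix whose rows and columns are
indexed by `k ∈ {-M, ..., N}` (the 0-based row `i` corresponds to `k = i - M`), with
diagonal entries `a k`, superdiagonal entries `H_{k,k+1} = b k` and subdiagonal entries
`H_{k+1,k} = c (k+1)`, all other entries zero. -/
def tridZ (M N : ℕ) (a b c : ℤ → ℂ) : Matrix (Fin (M + N + 1)) (Fin (M + N + 1)) ℂ :=
  Matrix.of fun i j =>
    if ((i : ℕ) : ℤ) = ((j : ℕ) : ℤ) then a (((i : ℕ) : ℤ) - (M : ℤ))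
    else if ((j : ℕ) : ℤ) = ((i : ℕ) : ℤ) + 1 then b (((i : ℕ) : ℤ) - (M : ℤ))
    else if ((i : ℕ) : ℤ) = ((j : ℕ) : ℤ) + 1 then c (((i : ℕ) : ℤ) - (M : ℤ))
    else 0

/-- zero extension of a `Fin n`-vector to `ℤ`. -/
def extZ (n : ℕ) (x : Fin n → ℂ) (t : ℤ) : ℂ :=
  if h : 0 ≤ t ∧ t < (n : ℤ) then x ⟨t.toNat, by omega⟩ else 0

lemma extZ_coe {n : ℕ} (x : Fin n → ℂ) (i : Fin n) : extZ n x ((i : ℕ) : ℤ) = x i := by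
  have h : (0:ℤ) ≤ ((i:ℕ):ℤ) ∧ ((i:ℕ):ℤ) < (n:ℤ) := ⟨Int.natCast_nonneg _, by exact_mod_cast i.isLt⟩
  rw [extZ, dif_pos h]
  exact congrArg x (Fin.ext (by simp))

lemma extZ_mul {n : ℕ} (k : ℂ) (x : Fin n → ℂ) (t : ℤ) :
    extZ n (fun j => k * x j) t = k * extZ n x t := by
  unfold extZ; split <;> simp

lemma sum_ite_extZ {n : ℕ} (t : ℤ) (g : Fin n → ℂ) :
    (∑ j : Fin n, if ((j : ℕ) : ℤ) = t then g j else 0) = extZ n g t := by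
  unfold extZ
  split
  · rename_i h
    rw [Finset.sum_eq_single_of_mem (⟨t.toNat, by omega⟩ : Fin n) (Finset.mem_univ _)]
    · rw [if_pos (show ((t.toNat : ℕ) : ℤ) = t by omega)]
    · intro j _ hj
      rw [if_neg]
      intro hc
      exact hj (Fin.ext (show (j:ℕ) = t.toNat by omega))
  · rename_i h
    apply Finset.sum_eq_zero
    intro j _
    rw [if_neg]
    intro hc
    have := j.isLt
    omega

lemma rowsum (M N : ℕ) (a b c : ℤ → ℂ) (z : ℂ) (x : Fin (M + N + 1) → ℂ)
    (i : Fin (M + N + 1)) :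
    ((tridZ M N a b c - z • (1 : Matrix (Fin (M+N+1)) (Fin (M+N+1)) ℂ)) *ᵥ x) i =
      c (((i:ℕ):ℤ) - (M:ℤ)) * extZ (M+N+1) x (((i:ℕ):ℤ) - 1)
      + (a (((i:ℕ):ℤ) - (M:ℤ)) - z) * extZ (M+N+1) x ((i:ℕ):ℤ)
      + b (((i:ℕ):ℤ) - (M:ℤ)) * extZ (M+N+1) x (((i:ℕ):ℤ) + 1) := by
  have key : ∀ j : Fin (M+N+1),
      ((tridZ M N a b c - z • (1 : Matrix (Fin (M+N+1)) (Fin (M+N+1)) ℂ)) i j) * x j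
      = (if ((j:ℕ):ℤ) = ((i:ℕ):ℤ) then (a (((i:ℕ):ℤ) - (M:ℤ)) - z) * x j else 0)
        + (if ((j:ℕ):ℤ) = ((i:ℕ):ℤ) + 1 then b (((i:ℕ):ℤ) - (M:ℤ)) * x j else 0)
        + (if ((j:ℕ):ℤ) = ((i:ℕ):ℤ) - 1 then c (((i:ℕ):ℤ) - (M:ℤ)) * x j else 0) := by
    intro j
    have hfin : (i = j) = (((i:ℕ):ℤ) = ((j:ℕ):ℤ)) := by
      apply propext
      constructor
      · intro h; rw [h]
      · intro h; exact Fin.ext (by omega)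
    rw [Matrix.sub_apply, Matrix.smul_apply, Matrix.one_apply, smul_eq_mul]
    show ((tridZ M N a b c) i j - _) * x j = _
    rw [tridZ, Matrix.of_apply]
    simp only [hfin]
    split_ifs <;> first | (exfalso; omega) | ring1
  rw [mulVec, dotProduct]
  calc (∑ j, (tridZ M N a b c - z • (1 : Matrix (Fin (M+N+1)) (Fin (M+N+1)) ℂ)) i j * x j)
      = ∑ j : Fin (M+N+1),
        ((if ((j:ℕ):ℤ) = ((i:ℕ):ℤ) then (a (((i:ℕ):ℤ) - (M:ℤ)) - z) * x j else 0)
        + (if ((j:ℕ):ℤ) = ((i:ℕ):ℤ) + 1 then b (((i:ℕ):ℤ) - (M:ℤ)) * x j else 0)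
        + (if ((j:ℕ):ℤ) = ((i:ℕ):ℤ) - 1 then c (((i:ℕ):ℤ) - (M:ℤ)) * x j else 0)) :=
        Finset.sum_congr rfl (fun j _ => key j)
    _ = extZ (M+N+1) (fun j => (a (((i:ℕ):ℤ) - (M:ℤ)) - z) * x j) ((i:ℕ):ℤ)
        + extZ (M+N+1) (fun j => b (((i:ℕ):ℤ) - (M:ℤ)) * x j) (((i:ℕ):ℤ) + 1)
        + extZ (M+N+1) (fun j => c (((i:ℕ):ℤ) - (M:ℤ)) * x j) (((i:ℕ):ℤ) - 1) := by
        rw [Finset.sum_add_distrib, Finset.sum_add_distrib, sum_ite_extZ, sum_ite_extZ, sum_ite_extZ]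
    _ = _ := by rw [extZ_mul, extZ_mul, extZ_mul]; ring

/-- the explicit solution vector built from the continued fractions -/
noncomputable def ufun (D0inv : ℂ) (f cc bb : ℤ → ℂ) (t : ℤ) : ℂ :=
  if 0 ≤ t then (-1)^t.toNat * D0inv * ∏ s ∈ Finset.Icc 1 t, (f s * cc s)
  else (-1)^(-t).toNat * D0inv * ∏ s ∈ Finset.Icc t (-1), (f s * bb s)

lemma ufun_zero (D0inv : ℂ) (f cc bb : ℤ → ℂ) : ufun D0inv f cc bb 0 = D0inv := by
  rw [ufun, if_pos le_rfl]
  rw [show Finset.Icc (1:ℤ) 0 = ∅ from Finset.Icc_eq_empty (by omega)]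
  simp

lemma ufun_down (D0inv : ℂ) (f cc bb : ℤ → ℂ) (t : ℤ) (ht : 1 ≤ t) :
    ufun D0inv f cc bb t = -(f t * cc t * ufun D0inv f cc bb (t-1)) := by
  rw [ufun, ufun, if_pos (by omega : (0:ℤ) ≤ t), if_pos (by omega : (0:ℤ) ≤ t - 1)]
  rw [show Finset.Icc (1:ℤ) t = insert t (Finset.Icc 1 (t-1)) from by
    ext s; simp only [Finset.mem_Icc, Finset.mem_insert]; omega]
  rw [Finset.prod_insert (by simp only [Finset.mem_Icc]; omega)]
  rw [show t.toNat = (t-1).toNat + 1 by omega, pow_succ]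
  ring

lemma ufun_up (D0inv : ℂ) (f cc bb : ℤ → ℂ) (t : ℤ) (ht : t ≤ -1) :
    ufun D0inv f cc bb t = -(f t * bb t * ufun D0inv f cc bb (t+1)) := by
  by_cases h1 : t = -1
  · subst h1
    rw [ufun, ufun, if_neg (by omega), if_pos (by omega : (0:ℤ) ≤ -1 + 1)]
    rw [show Finset.Icc (-1:ℤ) (-1) = {-1} from Finset.Icc_self _, Finset.prod_singleton]
    rw [show Finset.Icc (1:ℤ) (-1+1) = ∅ from Finset.Icc_eq_empty (by omega)]
    norm_num
    ring
  · rw [ufun, ufun, if_neg (by omega), if_neg (by omega)]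
    rw [show Finset.Icc t (-1:ℤ) = insert t (Finset.Icc (t+1) (-1)) from by
      ext s; simp only [Finset.mem_Icc, Finset.mem_insert]; omega]
    rw [Finset.prod_insert (by simp only [Finset.mem_Icc]; omega)]
    rw [show (-t).toNat = (-(t+1)).toNat + 1 by omega, pow_succ]
    ring

/-- if all denominators of the two continued-fraction recurrences are
nonzero at `z`, and moreover `D₀(z) = a 0 - z - c 0 * f (-1) * b (-1) - b 0 * f 1 * c 1 ≠ 0`,
then `H - z•1` is invertible and the `(0,0)` entry of its inverse (at the central index
`k = 0`, i.e. 0-based index `M`) equals the two-continued-fraction Green's function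
`1 / D₀(z)`. -/
theorem tridZ_resolvent_central_entry
    (M N : ℕ) (a b c : ℤ → ℂ) (z : ℂ) (f : ℤ → ℂ)
    (hup0 : f (-(M : ℤ) - 1) = 0)
    (hupden : ∀ k : ℤ, -(M : ℤ) ≤ k → k ≤ -1 →
      a k - z - c k * f (k - 1) * b (k - 1) ≠ 0)
    (hup : ∀ k : ℤ, -(M : ℤ) ≤ k → k ≤ -1 →
      f k = (a k - z - c k * f (k - 1) * b (k - 1))⁻¹)
    (hdown0 : f ((N : ℤ) + 1) = 0)
    (hdownden : ∀ k : ℤ, 1 ≤ k → k ≤ (N : ℤ) →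
      a k - z - b k * f (k + 1) * c (k + 1) ≠ 0)
    (hdown : ∀ k : ℤ, 1 ≤ k → k ≤ (N : ℤ) →
      f k = (a k - z - b k * f (k + 1) * c (k + 1))⁻¹)
    (hD0 : a 0 - z - c 0 * f (-1) * b (-1) - b 0 * f 1 * c 1 ≠ 0) :
    IsUnit (tridZ M N a b c - z • (1 : Matrix (Fin (M + N + 1)) (Fin (M + N + 1)) ℂ)) ∧
      (tridZ M N a b c - z • (1 : Matrix (Fin (M + N + 1)) (Fin (M + N + 1)) ℂ))⁻¹
          (⟨M, by omega⟩ : Fin (M + N + 1)) (⟨M, by omega⟩ : Fin (M + N + 1)) =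
        (a 0 - z - c 0 * f (-1) * b (-1) - b 0 * f 1 * c 1)⁻¹ := by
  set A : Matrix (Fin (M+N+1)) (Fin (M+N+1)) ℂ :=
    tridZ M N a b c - z • (1 : Matrix (Fin (M + N + 1)) (Fin (M + N + 1)) ℂ) with hAdef
  -- row formula in shifted coordinates
  have rowk : ∀ (x : Fin (M+N+1) → ℂ) (t : ℤ) (i : Fin (M+N+1)),
      ((i:ℕ):ℤ) = t + (M:ℤ) →
      (A *ᵥ x) i = c t * extZ (M+N+1) x (t+(M:ℤ)-1) + (a t - z) * extZ (M+N+1) x (t+(M:ℤ))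
        + b t * extZ (M+N+1) x (t+(M:ℤ)+1) := by
    intro x t i hi
    have h := rowsum M N a b c z x i
    rw [hi, show t + (M:ℤ) - (M:ℤ) = t by ring] at h
    exact h
  have hXout : ∀ (x : Fin (M+N+1) → ℂ) (t : ℤ), (t < 0 ∨ (M+N+1:ℤ) ≤ t) →
      extZ (M+N+1) x t = 0 := by
    intro x t ht
    rw [extZ, dif_neg (by omega)]
  -- the kernel is trivial
  have ker : ∀ x : Fin (M+N+1) → ℂ, A *ᵥ x = 0 → x = 0 := by
    intro x hx
    have hrow : ∀ (t : ℤ), -(M:ℤ) ≤ t → t ≤ (N:ℤ) →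
        c t * extZ (M+N+1) x (t+(M:ℤ)-1) + (a t - z) * extZ (M+N+1) x (t+(M:ℤ))
          + b t * extZ (M+N+1) x (t+(M:ℤ)+1) = 0 := by
      intro t h1 h2
      have h := rowk x t ⟨(t+(M:ℤ)).toNat, by omega⟩
        (show (((t+(M:ℤ)).toNat : ℕ):ℤ) = t + (M:ℤ) by omega)
      rw [hx] at h
      simpa using h.symm
    set X : ℤ → ℂ := extZ (M+N+1) x with hX
    have hXout' : ∀ t : ℤ, (t < 0 ∨ (M:ℤ)+(N:ℤ)+1 ≤ t) → X t = 0 := fun t ht => hXout x t ht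
    -- downward recursion on the positive side
    have Pd : ∀ d : ℕ, ∀ t : ℤ, 1 ≤ t → t ≤ (N:ℤ) → ((N:ℤ) - t).toNat = d →
        X (t+(M:ℤ)) = -(f t * c t * X (t+(M:ℤ)-1)) := by
      intro d
      induction d using Nat.strong_induction_on with
      | _ d ih =>
        intro t h1 h2 hd
        have hbt : b t * X (t+(M:ℤ)+1) = -(b t * (f (t+1) * c (t+1) * X (t+(M:ℤ)))) := by
          by_cases hN : t = (N:ℤ)
          · rw [hXout' (t+(M:ℤ)+1) (by omega), hN, hdown0]
            ring
          · have h := ih ((N:ℤ) - (t+1)).toNat (by omega) (t+1) (by omega) (by omega) rfl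
            rw [show t+1+(M:ℤ) = t+(M:ℤ)+1 by ring] at h
            rw [show t+(M:ℤ)+1-1 = t+(M:ℤ) by ring] at h
            rw [h]
            ring
        have hr := hrow t (by omega) h2
        rw [hbt] at hr
        have h2' : (a t - z - b t * f (t+1) * c (t+1)) * X (t+(M:ℤ)) = -(c t * X (t+(M:ℤ)-1)) := by
          linear_combination hr
        have hden := hdownden t h1 h2
        have hf := hdown t h1 h2
        calc X (t+(M:ℤ))
            = f t * ((a t - z - b t * f (t+1) * c (t+1)) * X (t+(M:ℤ))) := by
              rw [hf, inv_mul_cancel_left₀ hden]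
          _ = f t * (-(c t * X (t+(M:ℤ)-1))) := by rw [h2']
          _ = -(f t * c t * X (t+(M:ℤ)-1)) := by ring
    -- upward recursion on the negative side
    have Pu : ∀ d : ℕ, ∀ t : ℤ, -(M:ℤ) ≤ t → t ≤ -1 → (t+(M:ℤ)).toNat = d →
        X (t+(M:ℤ)) = -(f t * b t * X (t+(M:ℤ)+1)) := by
      intro d
      induction d using Nat.strong_induction_on with
      | _ d ih =>
        intro t h1 h2 hd
        have hct : c t * X (t+(M:ℤ)-1) = -(c t * (f (t-1) * b (t-1) * X (t+(M:ℤ)))) := by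
          by_cases hM : t = -(M:ℤ)
          · rw [hXout' (t+(M:ℤ)-1) (by omega), show t - 1 = -(M:ℤ) - 1 by omega, hup0]
            ring
          · have h := ih (t-1+(M:ℤ)).toNat (by omega) (t-1) (by omega) (by omega) rfl
            rw [show t-1+(M:ℤ) = t+(M:ℤ)-1 by ring] at h
            rw [show t+(M:ℤ)-1+1 = t+(M:ℤ) by ring] at h
            rw [h]
            ring
        have hr := hrow t h1 (by omega)
        rw [hct] at hr
        have h2' : (a t - z - c t * f (t-1) * b (t-1)) * X (t+(M:ℤ)) = -(b t * X (t+(M:ℤ)+1)) := by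
          linear_combination hr
        have hden := hupden t h1 h2
        have hf := hup t h1 h2
        calc X (t+(M:ℤ))
            = f t * ((a t - z - c t * f (t-1) * b (t-1)) * X (t+(M:ℤ))) := by
              rw [hf, inv_mul_cancel_left₀ hden]
          _ = f t * (-(b t * X (t+(M:ℤ)+1))) := by rw [h2']
          _ = -(f t * b t * X (t+(M:ℤ)+1)) := by ring
    -- the center vanishes
    have hXm1 : c 0 * X ((0:ℤ)+(M:ℤ)-1) = -(c 0 * (f (-1) * b (-1) * X ((0:ℤ)+(M:ℤ)))) := by
      by_cases hM : M = 0
      · rw [hXout' ((0:ℤ)+(M:ℤ)-1) (by omega), show (-1 : ℤ) = -(M:ℤ)-1 by omega, hup0]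
        ring
      · have h := Pu ((-1)+(M:ℤ)).toNat (-1) (by omega) le_rfl rfl
        rw [show (-1)+(M:ℤ) = (0:ℤ)+(M:ℤ)-1 by ring] at h
        rw [show (0:ℤ)+(M:ℤ)-1+1 = (0:ℤ)+(M:ℤ) by ring] at h
        rw [h]
        ring
    have hX1 : b 0 * X ((0:ℤ)+(M:ℤ)+1) = -(b 0 * (f 1 * c 1 * X ((0:ℤ)+(M:ℤ)))) := by
      by_cases hN : N = 0
      · rw [hXout' ((0:ℤ)+(M:ℤ)+1) (by omega), show (1 : ℤ) = (N:ℤ)+1 by omega, hdown0]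
        ring
      · have h := Pd ((N:ℤ) - 1).toNat 1 le_rfl (by omega) rfl
        rw [show (1:ℤ)+(M:ℤ)-1 = (0:ℤ)+(M:ℤ) by ring] at h
        rw [show (1:ℤ)+(M:ℤ) = (0:ℤ)+(M:ℤ)+1 by ring] at h
        rw [h]
        ring
    have hr0 := hrow 0 (by omega) (by omega)
    have hc : (a 0 - z - c 0 * f (-1) * b (-1) - b 0 * f 1 * c 1) * X ((0:ℤ)+(M:ℤ)) = 0 := by
      linear_combination hr0 - hXm1 - hX1
    have hX0 : X ((0:ℤ)+(M:ℤ)) = 0 := by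
      rcases mul_eq_zero.mp hc with h | h
      · exact absurd h hD0
      · exact h
    -- propagate zero to the right
    have hpos : ∀ d : ℕ, ∀ t : ℤ, 0 ≤ t → t ≤ (N:ℤ) → t.toNat = d → X (t+(M:ℤ)) = 0 := by
      intro d
      induction d using Nat.strong_induction_on with
      | _ d ih =>
        intro t h1 h2 hd
        by_cases h0 : t = 0
        · rw [h0]; exact hX0
        · have h := Pd ((N:ℤ)-t).toNat t (by omega) h2 rfl
          have h' := ih (t-1).toNat (by omega) (t-1) (by omega) (by omega) rfl
          rw [show t-1+(M:ℤ) = t+(M:ℤ)-1 by ring] at h'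
          rw [h, h']
          ring
    -- propagate zero to the left
    have hneg : ∀ d : ℕ, ∀ t : ℤ, -(M:ℤ) ≤ t → t ≤ 0 → (-t).toNat = d → X (t+(M:ℤ)) = 0 := by
      intro d
      induction d using Nat.strong_induction_on with
      | _ d ih =>
        intro t h1 h2 hd
        by_cases h0 : t = 0
        · rw [h0]; exact hX0
        · have h := Pu (t+(M:ℤ)).toNat t h1 (by omega) rfl
          have h' := ih (-(t+1)).toNat (by omega) (t+1) (by omega) (by omega) rfl
          rw [show t+1+(M:ℤ) = t+(M:ℤ)+1 by ring] at h'
          rw [h, h']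
          ring
    funext i
    have hXi : x i = X ((i:ℕ):ℤ) := (extZ_coe x i).symm
    have hi : (0:ℤ) ≤ ((i:ℕ):ℤ) ∧ ((i:ℕ):ℤ) < (M:ℤ)+(N:ℤ)+1 := by
      have := i.isLt; constructor <;> omega
    by_cases hcase : (M:ℤ) ≤ ((i:ℕ):ℤ)
    · have h := hpos ((((i:ℕ):ℤ) - (M:ℤ))).toNat (((i:ℕ):ℤ) - (M:ℤ)) (by omega) (by omega) rfl
      rw [show ((i:ℕ):ℤ) - (M:ℤ) + (M:ℤ) = ((i:ℕ):ℤ) by ring] at h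
      rw [Pi.zero_apply, hXi, h]
    · have h := hneg (-(((i:ℕ):ℤ) - (M:ℤ))).toNat (((i:ℕ):ℤ) - (M:ℤ)) (by omega) (by omega) rfl
      rw [show ((i:ℕ):ℤ) - (M:ℤ) + (M:ℤ) = ((i:ℕ):ℤ) by ring] at h
      rw [Pi.zero_apply, hXi, h]
  -- invertibility
  have hdet : A.det ≠ 0 := by
    intro h
    obtain ⟨v, hv0, hv⟩ := Matrix.exists_mulVec_eq_zero_iff.mpr h
    exact hv0 (ker v hv)
  have hunit : IsUnit A := (Matrix.isUnit_iff_isUnit_det A).mpr (isUnit_iff_ne_zero.mpr hdet)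
  refine ⟨hunit, ?_⟩
  -- the explicit solution vector
  set D0 : ℂ := a 0 - z - c 0 * f (-1) * b (-1) - b 0 * f 1 * c 1 with hD0def
  set u : Fin (M+N+1) → ℂ := fun i => ufun D0⁻¹ f c b (((i:ℕ):ℤ) - (M:ℤ)) with hu_def
  have hext : ∀ t : ℤ, -((M:ℤ)+1) ≤ t → t ≤ (N:ℤ)+1 →
      extZ (M+N+1) u (t+(M:ℤ)) = ufun D0⁻¹ f c b t := by
    intro t h1 h2
    by_cases h : (0:ℤ) ≤ t + (M:ℤ) ∧ t + (M:ℤ) < ((M+N+1:ℕ):ℤ)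
    · rw [extZ, dif_pos (by exact_mod_cast h)]
      show ufun D0⁻¹ f c b ((((t+(M:ℤ)).toNat : ℕ):ℤ) - (M:ℤ)) = _
      rw [show (((t+(M:ℤ)).toNat : ℕ):ℤ) - (M:ℤ) = t by omega]
    · have hcast : ¬((0:ℤ) ≤ t + (M:ℤ) ∧ t + (M:ℤ) < ((M+N+1:ℕ):ℤ)) := h
      rw [extZ, dif_neg (by push_cast at hcast ⊢; omega)]
      push_cast at h
      by_cases ht : t = -(M:ℤ)-1
      · rw [ht, ufun_up D0⁻¹ f c b _ (by omega), hup0]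
        ring
      · have ht' : t = (N:ℤ)+1 := by omega
        rw [ht', ufun_down D0⁻¹ f c b _ (by omega), hdown0]
        ring
  -- A *ᵥ u is the central basis vector
  have hu : A *ᵥ u = Pi.single (⟨M, by omega⟩ : Fin (M+N+1)) 1 := by
    funext i
    have hilt := i.isLt
    set t : ℤ := ((i:ℕ):ℤ) - (M:ℤ) with ht_def
    have h1 : -(M:ℤ) ≤ t := by omega
    have h2 : t ≤ (N:ℤ) := by omega
    rw [rowk u t i (by omega)]
    rw [show t+(M:ℤ)-1 = (t-1)+(M:ℤ) by ring, show t+(M:ℤ)+1 = (t+1)+(M:ℤ) by ring]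
    rw [hext (t-1) (by omega) (by omega), hext t (by omega) (by omega),
        hext (t+1) (by omega) (by omega)]
    rw [Pi.single_apply]
    have hieq : (i = (⟨M, by omega⟩ : Fin (M+N+1))) ↔ t = 0 := by
      rw [Fin.ext_iff]
      change (i : ℕ) = M ↔ _
      omega
    rcases lt_trichotomy t 0 with hts | hts | hts
    · rw [if_neg (by rw [hieq]; omega)]
      have e1 := ufun_up D0⁻¹ f c b t (by omega)
      have e2 := ufun_up D0⁻¹ f c b (t-1) (by omega)
      rw [show t-1+1 = t by ring] at e2
      have hden := hupden t h1 (by omega)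
      have hf := hup t h1 (by omega)
      have hfd : f t * (a t - z - c t * f (t-1) * b (t-1)) = 1 := by
        rw [hf]; exact inv_mul_cancel₀ hden
      rw [e2, e1]
      linear_combination (-(b t * ufun D0⁻¹ f c b (t+1))) * hfd
    · rw [if_pos (by rw [hieq]; omega)]
      rw [show t = 0 from hts]
      have e1 := ufun_up D0⁻¹ f c b (-1) le_rfl
      rw [show (-1:ℤ)+1 = 0 by ring] at e1
      have e2 := ufun_down D0⁻¹ f c b 1 le_rfl
      rw [show (1:ℤ)-1 = 0 by ring] at e2
      rw [show (0:ℤ)-1 = -1 by ring, show (0:ℤ)+1 = 1 by ring, e1, e2, ufun_zero]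
      have : D0 * D0⁻¹ = 1 := mul_inv_cancel₀ hD0
      linear_combination this
    · rw [if_neg (by rw [hieq]; omega)]
      have e1 := ufun_down D0⁻¹ f c b t (by omega)
      have e2 := ufun_down D0⁻¹ f c b (t+1) (by omega)
      rw [show t+1-1 = t by ring] at e2
      have hden := hdownden t (by omega) h2
      have hf := hdown t (by omega) h2
      have hfd : f t * (a t - z - b t * f (t+1) * c (t+1)) = 1 := by
        rw [hf]; exact inv_mul_cancel₀ hden
      rw [e2, e1]
      linear_combination (-(c t * ufun D0⁻¹ f c b (t-1))) * hfd
  -- conclude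
  have hAA : A⁻¹ * A = 1 := Matrix.nonsing_inv_mul A (isUnit_iff_ne_zero.mpr hdet)
  have hvec : A⁻¹ *ᵥ (A *ᵥ u) = u := by
    rw [Matrix.mulVec_mulVec, hAA, Matrix.one_mulVec]
  rw [hu, Matrix.mulVec_single] at hvec
  have hentry := congrFun hvec (⟨M, by omega⟩ : Fin (M+N+1))
  replace hentry : A⁻¹ ⟨M, by omega⟩ ⟨M, by omega⟩ = u ⟨M, by omega⟩ := by
    rw [← hentry]; simp
  rw [hentry]
  show ufun D0⁻¹ f c b (((M:ℕ):ℤ) - (M:ℤ)) = D0⁻¹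
  rw [show ((M:ℕ):ℤ) - (M:ℤ) = 0 by ring, ufun_zero]
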